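/- arXiv:quant-ph/0104093 — 4 statements merged into one kernel-verified Lean document; each statement's English description precedes it below -/
import Mathlib

section
/- Let H1 and H2 be finite-dimensional complex Hilbert spaces. Let a_1,...,a_n be non-collinear unit vectors in H1 and b_1,...,b_n be non-collinear unit vectors in H2, with at least one of the families (a_j), (b_j) linearly independent, and w_j > 0; likewise A_1,...,A_N non-collinear unit vectors in H1, B_1,...,B_N non-collinear unit vectors in H2, at least one of (A_k), (B_k) linearly independent, and W_k > 0. If Σ_{j=1}^{n} w_j |a_j ⊗ b_j⟩⟨a_j ⊗ b_j| = Σ_{k=1}^{N} W_k |A_k ⊗ B_k⟩⟨A_k ⊗ B_k| as operators on H1 ⊗ H2, then N = n. -/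
open scoped TensorProduct

/-- Two vectors are collinear iff one is a unimodular complex multiple of the other. -/
def IsCollinear {H : Type*} [AddCommGroup H] [Module ℂ H] (u v : H) : Prop :=
  ∃ c : ℂ, ‖c‖ = 1 ∧ u = c • v


section Aux

variable {H1 H2 : Type*}
    [NormedAddCommGroup H1] [InnerProductSpace ℂ H1] [FiniteDimensional ℂ H1]
    [NormedAddCommGroup H2] [InnerProductSpace ℂ H2] [FiniteDimensional ℂ H2]

lemma inn_self_eq_zero
    (inn : (H1 ⊗[ℂ] H2) →ₗ⋆[ℂ] (H1 ⊗[ℂ] H2) →ₗ[ℂ] ℂ)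
    (hinn : ∀ (x1 y1 : H1) (x2 y2 : H2),
      inn (x1 ⊗ₜ[ℂ] x2) (y1 ⊗ₜ[ℂ] y2) = (inner ℂ x1 y1 : ℂ) * (inner ℂ x2 y2 : ℂ))
    (z : H1 ⊗[ℂ] H2) (hz : inn z z = 0) : z = 0 := by
  classical
  set e := stdOrthonormalBasis ℂ H1 with he
  set f := stdOrthonormalBasis ℂ H2 with hf
  set Bz := Module.Basis.tensorProduct e.toBasis f.toBasis with hBz
  set c : _ → ℂ := fun p => Bz.repr z p with hc
  have hrep : z = ∑ p, c p • Bz p := (Bz.sum_repr z).symm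
  have hb : ∀ p q, inn (Bz p) (Bz q) = if p = q then 1 else 0 := by
    intro p q
    have hp : Bz p = e p.1 ⊗ₜ[ℂ] f p.2 := by simp [hBz, Module.Basis.tensorProduct]
    have hq : Bz q = e q.1 ⊗ₜ[ℂ] f q.2 := by simp [hBz, Module.Basis.tensorProduct]
    rw [hp, hq, hinn,
      orthonormal_iff_ite.mp e.orthonormal, orthonormal_iff_ite.mp f.orthonormal]
    by_cases h1 : p = q
    · simp [h1]
    · rw [if_neg h1]
      rcases (not_and_or.mp (fun hh => h1 (Prod.ext hh.1 hh.2))) with h | h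
      · simp [h]
      · simp [h]
  have hz2 : ∀ p, inn (Bz p) z = c p := by
    intro p
    conv_lhs => rw [hrep]
    rw [map_sum]
    simp only [map_smul, smul_eq_mul, hb]
    rw [Finset.sum_eq_single p]
    · simp
    · intro q _ hq; simp [Ne.symm hq]
    · intro h; simp at h
  have key : inn z z = ∑ p, (starRingEnd ℂ) (c p) * c p := by
    have h1 : inn z = ∑ p, (starRingEnd ℂ) (c p) • inn (Bz p) := by
      conv_lhs => rw [hrep]
      rw [map_sum]
      simp only [map_smulₛₗ]
    rw [h1]
    simp only [LinearMap.sum_apply, LinearMap.smul_apply, smul_eq_mul]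
    exact Finset.sum_congr rfl fun p _ => by rw [hz2 p]
  have hsum : ∑ p, Complex.normSq (c p) = 0 := by
    have h2 : ((∑ p, Complex.normSq (c p) : ℝ) : ℂ) = 0 := by
      push_cast
      rw [← hz, key]
      refine (Finset.sum_congr rfl fun p _ => ?_).symm
      rw [Complex.normSq_eq_conj_mul_self]
    exact_mod_cast h2
  have hc0 : ∀ p, c p = 0 := by
    intro p
    have := (Finset.sum_eq_zero_iff_of_nonneg
      (fun q _ => Complex.normSq_nonneg (c q))).mp hsum p (Finset.mem_univ p)
    exact Complex.normSq_eq_zero.mp this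
  rw [hrep]
  simp [hc0]

end Aux

section Aux2

variable {H1 H2 : Type*}
    [NormedAddCommGroup H1] [InnerProductSpace ℂ H1] [FiniteDimensional ℂ H1]
    [NormedAddCommGroup H2] [InnerProductSpace ℂ H2] [FiniteDimensional ℂ H2]

lemma tmul_li_left {n : ℕ} (a : Fin n → H1) (b : Fin n → H2)
    (ha : LinearIndependent ℂ a) (hb : ∀ j, b j ≠ 0) :
    LinearIndependent ℂ (fun j => a j ⊗ₜ[ℂ] b j) := by
  rw [Fintype.linearIndependent_iff]
  intro c hc j₀
  set g : H2 →ₗ[ℂ] ℂ := (innerSL ℂ (b j₀)).toLinearMap with hg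
  set Φ : H1 ⊗[ℂ] H2 →ₗ[ℂ] H1 :=
    (TensorProduct.rid ℂ H1).toLinearMap ∘ₗ LinearMap.lTensor H1 g with hΦdef
  have hΦ : ∀ (x : H1) (y : H2), Φ (x ⊗ₜ[ℂ] y) = g y • x := by
    intro x y
    simp [hΦdef, LinearMap.lTensor_tmul, TensorProduct.rid_tmul]
  have h2 : ∑ j, (c j * g (b j)) • a j = 0 := by
    have h3 := congrArg Φ hc
    rw [map_sum, map_zero] at h3
    simpa [hΦ, smul_smul, mul_comm] using h3
  have h4 := (Fintype.linearIndependent_iff.mp ha) _ h2 j₀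
  have hg0 : g (b j₀) ≠ 0 := by
    simp only [hg, ContinuousLinearMap.coe_coe, innerSL_apply_apply]
    exact inner_self_ne_zero.mpr (hb j₀)
  exact (mul_eq_zero.mp h4).resolve_right hg0

lemma tmul_li_right {n : ℕ} (a : Fin n → H1) (b : Fin n → H2)
    (hb : LinearIndependent ℂ b) (ha : ∀ j, a j ≠ 0) :
    LinearIndependent ℂ (fun j => a j ⊗ₜ[ℂ] b j) := by
  rw [Fintype.linearIndependent_iff]
  intro c hc j₀
  set g : H1 →ₗ[ℂ] ℂ := (innerSL ℂ (a j₀)).toLinearMap with hg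
  set Φ : H1 ⊗[ℂ] H2 →ₗ[ℂ] H2 :=
    (TensorProduct.lid ℂ H2).toLinearMap ∘ₗ LinearMap.rTensor H2 g with hΦdef
  have hΦ : ∀ (x : H1) (y : H2), Φ (x ⊗ₜ[ℂ] y) = g x • y := by
    intro x y
    simp [hΦdef, LinearMap.rTensor_tmul, TensorProduct.lid_tmul]
  have h2 : ∑ j, (c j * g (a j)) • b j = 0 := by
    have h3 := congrArg Φ hc
    rw [map_sum, map_zero] at h3
    simpa [hΦ, smul_smul, mul_comm] using h3
  have h4 := (Fintype.linearIndependent_iff.mp hb) _ h2 j₀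
  have hg0 : g (a j₀) ≠ 0 := by
    simp only [hg, ContinuousLinearMap.coe_coe, innerSL_apply_apply]
    exact inner_self_ne_zero.mpr (ha j₀)
  exact (mul_eq_zero.mp h4).resolve_right hg0

end Aux2

lemma exists_dual_vec {H1 H2 : Type*}
    [NormedAddCommGroup H1] [InnerProductSpace ℂ H1] [FiniteDimensional ℂ H1]
    [NormedAddCommGroup H2] [InnerProductSpace ℂ H2] [FiniteDimensional ℂ H2]
    (inn : (H1 ⊗[ℂ] H2) →ₗ⋆[ℂ] (H1 ⊗[ℂ] H2) →ₗ[ℂ] ℂ)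
    (hinn : ∀ (x1 y1 : H1) (x2 y2 : H2),
      inn (x1 ⊗ₜ[ℂ] x2) (y1 ⊗ₜ[ℂ] y2) = (inner ℂ x1 y1 : ℂ) * (inner ℂ x2 y2 : ℂ))
    {m : ℕ} (v : Fin m → H1 ⊗[ℂ] H2) (hv : LinearIndependent ℂ v)
    (t : Fin m → ℂ) : ∃ y, ∀ i, inn (v i) y = t i := by
  classical
  set M : Matrix (Fin m) (Fin m) ℂ := Matrix.of fun i j => inn (v i) (v j) with hM
  have hmv : ∀ (d : Fin m → ℂ) (i), inn (v i) (∑ j, d j • v j) = M.mulVec d i := by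
    intro d i
    rw [map_sum]
    simp only [map_smul, smul_eq_mul]
    simp [Matrix.mulVec, dotProduct, hM, mul_comm]
  have hinj : Function.Injective M.mulVecLin := by
    rw [injective_iff_map_eq_zero]
    intro d hd
    have hd' : ∀ i, inn (v i) (∑ j, d j • v j) = 0 := by
      intro i
      rw [hmv]
      rw [Matrix.mulVecLin_apply] at hd
      exact congrFun hd i
    have hu : (∑ j, d j • v j) = 0 := by
      apply inn_self_eq_zero inn hinn
      have h1 : inn (∑ j, d j • v j) = ∑ j, (starRingEnd ℂ) (d j) • inn (v j) := by
        rw [map_sum]; simp only [map_smulₛₗ]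
      rw [h1]
      simp only [LinearMap.sum_apply, LinearMap.smul_apply, smul_eq_mul]
      exact Finset.sum_eq_zero fun j _ => by rw [hd' j, mul_zero]
    have := Fintype.linearIndependent_iff.mp hv d hu
    funext i; exact this i
  have hsurj : Function.Surjective M.mulVecLin :=
    (LinearMap.injective_iff_surjective).mp hinj
  obtain ⟨d, hd⟩ := hsurj t
  refine ⟨∑ j, d j • v j, fun i => ?_⟩
  rw [hmv]
  rw [Matrix.mulVecLin_apply] at hd
  exact congrFun hd i

/-- If two convex sums of products of pairs of 1-projectors (each with non-collinear unit
vectors and one linearly independent family) represent the same operator on `H1 ⊗ H2`,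
then they have the same number of terms.  Here `inn` is the inner product on `H1 ⊗[ℂ] H2`,
the unique sesquilinear form with `inn (x1 ⊗ x2) (y1 ⊗ y2) = ⟨x1,y1⟩⟨x2,y2⟩`, and the
rank-one projector `|x⟩⟨x|` sends `y` to `inn x y • x`. -/
theorem convex_sum_of_products_of_projectors_card_eq
    {H1 H2 : Type*}
    [NormedAddCommGroup H1] [InnerProductSpace ℂ H1] [FiniteDimensional ℂ H1]
    [NormedAddCommGroup H2] [InnerProductSpace ℂ H2] [FiniteDimensional ℂ H2]
    (inn : (H1 ⊗[ℂ] H2) →ₗ⋆[ℂ] (H1 ⊗[ℂ] H2) →ₗ[ℂ] ℂ)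
    (hinn : ∀ (x1 y1 : H1) (x2 y2 : H2),
      inn (x1 ⊗ₜ[ℂ] x2) (y1 ⊗ₜ[ℂ] y2) = (inner ℂ x1 y1 : ℂ) * (inner ℂ x2 y2 : ℂ))
    {n N : ℕ}
    (a : Fin n → H1) (b : Fin n → H2) (w : Fin n → ℝ)
    (A : Fin N → H1) (B : Fin N → H2) (W : Fin N → ℝ)
    (ha1 : ∀ j, ‖a j‖ = 1) (hb1 : ∀ j, ‖b j‖ = 1)
    (hA1 : ∀ k, ‖A k‖ = 1) (hB1 : ∀ k, ‖B k‖ = 1)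
    (hanc : ∀ i j, i ≠ j → ¬ IsCollinear (a i) (a j))
    (hbnc : ∀ i j, i ≠ j → ¬ IsCollinear (b i) (b j))
    (hAnc : ∀ i j, i ≠ j → ¬ IsCollinear (A i) (A j))
    (hBnc : ∀ i j, i ≠ j → ¬ IsCollinear (B i) (B j))
    (hli : LinearIndependent ℂ a ∨ LinearIndependent ℂ b)
    (hLI : LinearIndependent ℂ A ∨ LinearIndependent ℂ B)
    (hw : ∀ j, 0 < w j) (hW : ∀ k, 0 < W k)
    (heq : ∀ y : H1 ⊗[ℂ] H2,
      ∑ j, (w j : ℂ) • (inn (a j ⊗ₜ[ℂ] b j) y • (a j ⊗ₜ[ℂ] b j)) =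
      ∑ k, (W k : ℂ) • (inn (A k ⊗ₜ[ℂ] B k) y • (A k ⊗ₜ[ℂ] B k))) :
    N = n := by
  classical
  set v : Fin n → H1 ⊗[ℂ] H2 := fun j => a j ⊗ₜ[ℂ] b j with hvdef
  set V : Fin N → H1 ⊗[ℂ] H2 := fun k => A k ⊗ₜ[ℂ] B k with hVdef
  have hane : ∀ j, a j ≠ 0 := fun j h => by simpa [h] using ha1 j
  have hbne : ∀ j, b j ≠ 0 := fun j h => by simpa [h] using hb1 j
  have hAne : ∀ k, A k ≠ 0 := fun k h => by simpa [h] using hA1 k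
  have hBne : ∀ k, B k ≠ 0 := fun k h => by simpa [h] using hB1 k
  have hv : LinearIndependent ℂ v := by
    rcases hli with h | h
    · exact tmul_li_left a b h hbne
    · exact tmul_li_right a b h hane
  have hV : LinearIndependent ℂ V := by
    rcases hLI with h | h
    · exact tmul_li_left A B h hBne
    · exact tmul_li_right A B h hAne
  have hwne : ∀ j, (w j : ℂ) ≠ 0 := fun j => Complex.ofReal_ne_zero.mpr (hw j).ne'
  have hWne : ∀ k, (W k : ℂ) ≠ 0 := fun k => Complex.ofReal_ne_zero.mpr (hW k).ne'
  have hspan : Submodule.span ℂ (Set.range v) = Submodule.span ℂ (Set.range V) := by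
    apply le_antisymm
    · rw [Submodule.span_le]
      rintro _ ⟨i, rfl⟩
      obtain ⟨y, hy⟩ := exists_dual_vec inn hinn v hv
        (fun j => if j = i then ((w i : ℂ))⁻¹ else 0)
      have hL : ∑ j, (w j : ℂ) • (inn (v j) y • v j) = v i := by
        rw [Finset.sum_eq_single i]
        · rw [hy i]
          simp [smul_smul, mul_inv_cancel₀ (hwne i)]
        · intro j _ hj
          rw [hy j, if_neg hj, zero_smul, smul_zero]
        · intro h; exact absurd (Finset.mem_univ i) h
      have hR := heq y
      rw [hL] at hR
      rw [hR]
      exact Submodule.sum_mem _ fun k _ => Submodule.smul_mem _ _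
        (Submodule.smul_mem _ _ (Submodule.subset_span ⟨k, rfl⟩))
    · rw [Submodule.span_le]
      rintro _ ⟨i, rfl⟩
      obtain ⟨y, hy⟩ := exists_dual_vec inn hinn V hV
        (fun k => if k = i then ((W i : ℂ))⁻¹ else 0)
      have hL : ∑ k, (W k : ℂ) • (inn (V k) y • V k) = V i := by
        rw [Finset.sum_eq_single i]
        · rw [hy i]
          simp [smul_smul, mul_inv_cancel₀ (hWne i)]
        · intro k _ hk
          rw [hy k, if_neg hk, zero_smul, smul_zero]
        · intro h; exact absurd (Finset.mem_univ i) h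
      have hR := heq y
      rw [hL] at hR
      rw [← hR]
      exact Submodule.sum_mem _ fun j _ => Submodule.smul_mem _ _
        (Submodule.smul_mem _ _ (Submodule.subset_span ⟨j, rfl⟩))
  have h1 := finrank_span_eq_card hv
  have h2 := finrank_span_eq_card hV
  rw [hspan] at h1
  rw [h1] at h2
  simpa using h2.symm
end

section
/- Let H1, H2, H3 be finite-dimensional complex Hilbert spaces. Let a_1,...,a_n ∈ H1 be linearly independent unit vectors, b_1,...,b_n ∈ H2 unit vectors, c_1,...,c_n ∈ H3 linearly independent unit vectors, and φ_1,...,φ_n nonzero complex numbers; likewise let A_1,...,A_N ∈ H1 be linearly independent unit vectors, B_1,...,B_N ∈ H2 unit vectors, C_1,...,C_N ∈ H3 linearly independent unit vectors, and ψ_1,...,ψ_N nonzero complex numbers. If Σ_{j=1}^{n} φ_j (a_j ⊗ b_j ⊗ c_j) = Σ_{k=1}^{N} ψ_k (A_k ⊗ B_k ⊗ C_k) in H1 ⊗ H2 ⊗ H3, then N = n. -/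
open scoped TensorProduct

open Module Submodule Set

/-- A linearly independent family over a field admits a dual family of functionals. -/
lemma exists_dual_family {K V : Type*} [Field K] [AddCommGroup V] [Module K V]
    {ι : Type*} [DecidableEq ι] {c : ι → V} (hc : LinearIndependent K c) :
    ∃ f : ι → Module.Dual K V, ∀ i j, f i (c j) = if i = j then 1 else 0 := by
  let bs := Basis.span hc
  choose g hg using fun i => LinearMap.exists_extend (V' := K) (bs.coord i)
  refine ⟨g, fun i j => ?_⟩
  have hm : c j ∈ Submodule.span K (Set.range c) := Submodule.subset_span ⟨j, rfl⟩
  have h1 : g i (c j) = bs.coord i ⟨c j, hm⟩ :=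
    LinearMap.congr_fun (hg i) ⟨c j, hm⟩
  have h2 : (⟨c j, hm⟩ : Submodule.span K (Set.range c)) = bs j :=
    (Basis.span_apply hc j).symm
  rw [h1, h2, Basis.coord_apply, Basis.repr_self, Finsupp.single_apply]
  simp [eq_comm]

/-- Tensors of a linearly independent family with nonzero vectors are
linearly independent. -/
lemma tensor_linearIndependent {K V W : Type*} [Field K] [AddCommGroup V] [Module K V]
    [AddCommGroup W] [Module K W] {n : ℕ} {a : Fin n → V} {b : Fin n → W}
    (ha : LinearIndependent K a) (hb : ∀ j, b j ≠ 0) :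
    LinearIndependent K (fun j => a j ⊗ₜ[K] b j) := by
  classical
  obtain ⟨f, hf⟩ := exists_dual_family ha
  rw [Fintype.linearIndependent_iff]
  intro g hg j
  have h := congrArg (fun x => (TensorProduct.lid K W) ((TensorProduct.map (f j) LinearMap.id) x)) hg
  simp only [map_sum, map_smul, TensorProduct.map_tmul, TensorProduct.lid_tmul,
    LinearMap.id_coe, id_eq, map_zero, hf, ite_smul, one_smul, zero_smul, smul_ite,
    smul_zero, Finset.sum_ite_eq, Finset.mem_univ, if_true] at h
  exact (smul_eq_zero.mp h).resolve_right (hb j)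

set_option maxHeartbeats 1000000 in
/-- Two tridecompositions of the same vector of `H1 ⊗ H2 ⊗ H3`, each with nonzero
coefficients, unit vectors, and the first and third families linearly independent,
have the same number of terms. -/
theorem tridecomposition_card_eq
    {H1 H2 H3 : Type*}
    [NormedAddCommGroup H1] [InnerProductSpace ℂ H1] [FiniteDimensional ℂ H1]
    [NormedAddCommGroup H2] [InnerProductSpace ℂ H2] [FiniteDimensional ℂ H2]
    [NormedAddCommGroup H3] [InnerProductSpace ℂ H3] [FiniteDimensional ℂ H3]
    {n N : ℕ}
    (a : Fin n → H1) (b : Fin n → H2) (c : Fin n → H3) (φ : Fin n → ℂ)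
    (A : Fin N → H1) (B : Fin N → H2) (C : Fin N → H3) (ψ : Fin N → ℂ)
    (ha1 : ∀ j, ‖a j‖ = 1) (hb1 : ∀ j, ‖b j‖ = 1) (hc1 : ∀ j, ‖c j‖ = 1)
    (hA1 : ∀ k, ‖A k‖ = 1) (hB1 : ∀ k, ‖B k‖ = 1) (hC1 : ∀ k, ‖C k‖ = 1)
    (hali : LinearIndependent ℂ a) (hcli : LinearIndependent ℂ c)
    (hALI : LinearIndependent ℂ A) (hCLI : LinearIndependent ℂ C)
    (hφ : ∀ j, φ j ≠ 0) (hψ : ∀ k, ψ k ≠ 0)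
    (heq : ∑ j, φ j • ((a j ⊗ₜ[ℂ] b j) ⊗ₜ[ℂ] c j) =
           ∑ k, ψ k • ((A k ⊗ₜ[ℂ] B k) ⊗ₜ[ℂ] C k)) :
    N = n := by
  classical
  obtain ⟨f, hf⟩ := exists_dual_family hcli
  obtain ⟨F, hF⟩ := exists_dual_family hCLI
  -- contraction against a functional on H3
  let cf : Module.Dual ℂ H3 → ((H1 ⊗[ℂ] H2) ⊗[ℂ] H3 →ₗ[ℂ] H1 ⊗[ℂ] H2) := fun g =>
    (TensorProduct.rid ℂ (H1 ⊗[ℂ] H2)).toLinearMap ∘ₗ LinearMap.lTensor (H1 ⊗[ℂ] H2) g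
  have hcf : ∀ (g : Module.Dual ℂ H3) (m : H1 ⊗[ℂ] H2) (x : H3),
      cf g (m ⊗ₜ[ℂ] x) = g x • m := by
    intro g m x
    simp [cf]
  have key : ∀ g : Module.Dual ℂ H3,
      ∑ j, (φ j * g (c j)) • (a j ⊗ₜ[ℂ] b j) = ∑ k, (ψ k * g (C k)) • (A k ⊗ₜ[ℂ] B k) := by
    intro g
    have h := congrArg (cf g) heq
    simpa only [map_sum, map_smul, hcf, smul_smul] using h
  set S : Submodule ℂ (H1 ⊗[ℂ] H2) := Submodule.span ℂ (Set.range fun j => a j ⊗ₜ[ℂ] b j)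
  set T : Submodule ℂ (H1 ⊗[ℂ] H2) := Submodule.span ℂ (Set.range fun k => A k ⊗ₜ[ℂ] B k)
  have hSmem : ∀ j, (a j ⊗ₜ[ℂ] b j) ∈ T := by
    intro j
    have h := key (f j)
    simp only [hf, mul_ite, mul_one, mul_zero, ite_smul, zero_smul,
      Finset.sum_ite_eq, Finset.mem_univ, if_true] at h
    have : a j ⊗ₜ[ℂ] b j = (φ j)⁻¹ • ∑ k, (ψ k * (f j) (C k)) • (A k ⊗ₜ[ℂ] B k) := by
      rw [← h, smul_smul, inv_mul_cancel₀ (hφ j), one_smul]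
    rw [this]
    exact Submodule.smul_mem _ _ (Submodule.sum_mem _ fun k _ =>
      Submodule.smul_mem _ _ (Submodule.subset_span ⟨k, rfl⟩))
  have hTmem : ∀ k, (A k ⊗ₜ[ℂ] B k) ∈ S := by
    intro k
    have h := (key (F k)).symm
    simp only [hF, mul_ite, mul_one, mul_zero, ite_smul, zero_smul,
      Finset.sum_ite_eq, Finset.mem_univ, if_true] at h
    have : A k ⊗ₜ[ℂ] B k = (ψ k)⁻¹ • ∑ j, (φ j * (F k) (c j)) • (a j ⊗ₜ[ℂ] b j) := by
      rw [← h, smul_smul, inv_mul_cancel₀ (hψ k), one_smul]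
    rw [this]
    exact Submodule.smul_mem _ _ (Submodule.sum_mem _ fun j _ =>
      Submodule.smul_mem _ _ (Submodule.subset_span ⟨j, rfl⟩))
  have hST : S = T :=
    le_antisymm (Submodule.span_le.mpr (Set.range_subset_iff.mpr hSmem))
      (Submodule.span_le.mpr (Set.range_subset_iff.mpr hTmem))
  have hb0 : ∀ j, b j ≠ 0 := fun j => norm_ne_zero_iff.mp (by rw [hb1 j]; exact one_ne_zero)
  have hB0 : ∀ k, B k ≠ 0 := fun k => norm_ne_zero_iff.mp (by rw [hB1 k]; exact one_ne_zero)
  have h1 : finrank ℂ S = n := by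
    rw [finrank_span_eq_card (tensor_linearIndependent hali hb0), Fintype.card_fin]
  have h2 : finrank ℂ T = N := by
    rw [finrank_span_eq_card (tensor_linearIndependent hALI hB0), Fintype.card_fin]
  rw [← h2, ← hST, h1]
end

section
/- Let H1 and H2 be finite-dimensional complex Hilbert spaces, let a_1,...,a_n ∈ H1 and b_1,...,b_n ∈ H2 be unit vectors, let w_1,...,w_n > 0, and let ρ be the operator on H1 ⊗ H2 given by ρ = Σ_{j=1}^{n} w_j |a_j ⊗ b_j⟩⟨a_j ⊗ b_j|. Define the null space of ρ on H1 as N1 = { φ ∈ H1 : ρ(φ ⊗ β) = 0 for every β ∈ H2 }. Then the span of {a_1,...,a_n} equals the orthogonal complement of N1 in H1. -/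
open scoped TensorProduct

/-- For `ρ = Σ_j w_j |a_j ⊗ b_j⟩⟨a_j ⊗ b_j|`, the span of the `a_j` equals the orthogonal
complement in `H1` of the null space `N1 = {φ ∈ H1 : ρ(φ ⊗ β) = 0 for all β ∈ H2}`.
Here `inn` is the inner product on `H1 ⊗[ℂ] H2`, the unique sesquilinear form with
`inn (x1 ⊗ x2) (y1 ⊗ y2) = ⟨x1,y1⟩⟨x2,y2⟩`, and the rank-one projector `|x⟩⟨x|` sends
`y` to `inn x y • x`. -/
theorem span_eq_orthogonal_of_nullspace
    {H1 H2 : Type*}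
    [NormedAddCommGroup H1] [InnerProductSpace ℂ H1] [FiniteDimensional ℂ H1]
    [NormedAddCommGroup H2] [InnerProductSpace ℂ H2] [FiniteDimensional ℂ H2]
    (inn : (H1 ⊗[ℂ] H2) →ₗ⋆[ℂ] (H1 ⊗[ℂ] H2) →ₗ[ℂ] ℂ)
    (hinn : ∀ (x1 y1 : H1) (x2 y2 : H2),
      inn (x1 ⊗ₜ[ℂ] x2) (y1 ⊗ₜ[ℂ] y2) = (inner ℂ x1 y1 : ℂ) * (inner ℂ x2 y2 : ℂ))
    {n : ℕ} (a : Fin n → H1) (b : Fin n → H2) (w : Fin n → ℝ)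
    (ha1 : ∀ j, ‖a j‖ = 1) (hb1 : ∀ j, ‖b j‖ = 1) (hw : ∀ j, 0 < w j) :
    (Submodule.span ℂ (Set.range a) : Set H1) =
      {x : H1 | ∀ φ : H1,
        (∀ β : H2,
          ∑ j, (w j : ℂ) • (inn (a j ⊗ₜ[ℂ] b j) (φ ⊗ₜ[ℂ] β) • (a j ⊗ₜ[ℂ] b j)) = 0) →
        (inner ℂ φ x : ℂ) = 0} := by
  ext x
  simp only [SetLike.mem_coe, Set.mem_setOf_eq]
  constructor
  · intro hx φ hφ
    have key : ∀ k, (inner ℂ (a k) φ : ℂ) = 0 := by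
      intro k
      have h0 := hφ (b k)
      have h1 := congrArg (inn (φ ⊗ₜ[ℂ] b k)) h0
      rw [map_sum, map_zero] at h1
      have h2 : ∀ j ∈ Finset.univ, (inn (φ ⊗ₜ[ℂ] b k))
          ((w j : ℂ) • (inn (a j ⊗ₜ[ℂ] b j) (φ ⊗ₜ[ℂ] b k) • (a j ⊗ₜ[ℂ] b j)))
          = ((w j * (Complex.normSq (inner ℂ (a j) φ) *
              Complex.normSq (inner ℂ (b j) (b k))) : ℝ) : ℂ) := by
        intro j _
        rw [map_smul, map_smul, hinn, hinn, smul_eq_mul, smul_eq_mul,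
          ← inner_conj_symm φ (a j), ← inner_conj_symm (b k) (b j)]
        push_cast
        rw [← Complex.mul_conj (inner ℂ (a j) φ), ← Complex.mul_conj (inner ℂ (b j) (b k))]
        ring
      rw [Finset.sum_congr rfl h2, ← Complex.ofReal_sum] at h1
      rw [Complex.ofReal_eq_zero] at h1
      have h3 : ∀ j ∈ Finset.univ, (0:ℝ) ≤ w j * (Complex.normSq (inner ℂ (a j) φ) *
          Complex.normSq (inner ℂ (b j) (b k))) := fun j _ =>
        mul_nonneg (hw j).le
          (mul_nonneg (Complex.normSq_nonneg _) (Complex.normSq_nonneg _))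
      have h4 := (Finset.sum_eq_zero_iff_of_nonneg h3).mp h1 k (Finset.mem_univ k)
      have hbk : (inner ℂ (b k) (b k) : ℂ) = 1 := by
        rw [inner_self_eq_norm_sq_to_K, hb1 k]; norm_num
      rw [hbk] at h4
      simp only [Complex.normSq_one, mul_one] at h4
      have := (mul_eq_zero.mp h4).resolve_left (ne_of_gt (hw k))
      exact Complex.normSq_eq_zero.mp this
    refine Submodule.span_induction (fun y hy => ?_) ?_ (fun y z _ _ hy hz => ?_)
      (fun c y _ hy => ?_) hx
    · obtain ⟨k, rfl⟩ := hy
      rw [← inner_conj_symm φ (a k), key k, map_zero]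
    · exact inner_zero_right φ
    · rw [inner_add_right, hy, hz, add_zero]
    · rw [inner_smul_right, hy, mul_zero]
  · intro hx
    have hmem : x ∈ ((Submodule.span ℂ (Set.range a))ᗮ)ᗮ := by
      rw [Submodule.mem_orthogonal]
      intro φ hφ
      apply hx
      intro β
      apply Finset.sum_eq_zero
      intro j _
      have haj : (inner ℂ (a j) φ : ℂ) = 0 :=
        hφ (a j) (Submodule.subset_span (Set.mem_range_self j))
      rw [hinn, haj, zero_mul, zero_smul, smul_zero]
    rwa [Submodule.orthogonal_orthogonal] at hmem
end

section
/- Let H1 and H2 be finite-dimensional complex Hilbert spaces and let Ψ, Φ ∈ H1 ⊗ H2. If for every linear operator A on H1 one has ⟨Ψ, (A ⊗ I)Ψ⟩ = ⟨Φ, (A ⊗ I)Φ⟩ (equivalently, the partial traces of |Ψ⟩⟨Ψ| and |Φ⟩⟨Φ| over H2 coincide), then there exists a unitary operator U on H2 such that Ψ = (I ⊗ U)Φ. -/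
open scoped TensorProduct

/-- If two finite families in a finite-dimensional complex inner product space have the
same Gram matrix, there is an inner-product-preserving surjective linear map sending one
family to the other. -/
lemma exists_unitary_map_of_gram_eq {H : Type*} [NormedAddCommGroup H]
    [InnerProductSpace ℂ H] [FiniteDimensional ℂ H] {ι : Type*} [Fintype ι]
    (φ ψ : ι → H) (hgram : ∀ i j, (inner ℂ (ψ i) (ψ j) : ℂ) = inner ℂ (φ i) (φ j)) :
    ∃ U : H →ₗ[ℂ] H, (∀ x y : H, (inner ℂ (U x) (U y) : ℂ) = inner ℂ x y) ∧
      Function.Surjective U ∧ ∀ i, U (φ i) = ψ i := by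
  classical
  set P : (ι → ℂ) →ₗ[ℂ] H := Fintype.linearCombination ℂ φ with hP
  set Q : (ι → ℂ) →ₗ[ℂ] H := Fintype.linearCombination ℂ ψ with hQ
  have hPQ : ∀ c d : ι → ℂ, (inner ℂ (Q c) (Q d) : ℂ) = inner ℂ (P c) (P d) := by
    intro c d
    simp only [hP, hQ, Fintype.linearCombination_apply, inner_sum, sum_inner,
      inner_smul_left, inner_smul_right, hgram]
  have hker : LinearMap.ker P ≤ LinearMap.ker Q := by
    intro c hc
    rw [LinearMap.mem_ker] at hc ⊢
    have h1 := hPQ c c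
    rw [hc, inner_zero_left] at h1
    exact inner_self_eq_zero.mp h1
  set e : ((ι → ℂ) ⧸ LinearMap.ker P) ≃ₗ[ℂ] LinearMap.range P :=
    LinearMap.quotKerEquivRange P with he
  set f : LinearMap.range P →ₗ[ℂ] H :=
    (Submodule.liftQ (LinearMap.ker P) Q hker).comp e.symm.toLinearMap with hfdef
  have hf : ∀ (c : ι → ℂ) (hm : P c ∈ LinearMap.range P), f ⟨P c, hm⟩ = Q c := by
    intro c hm
    have h1 : e (Submodule.Quotient.mk c) = ⟨P c, hm⟩ := by
      apply Subtype.ext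
      simp [he, LinearMap.quotKerEquivRange_apply_mk]
    have h2 : e.symm ⟨P c, hm⟩ = Submodule.Quotient.mk c := by
      rw [← h1, LinearEquiv.symm_apply_apply]
    simp [hfdef, h2, Submodule.liftQ_apply]
  have hfinner : ∀ s t : LinearMap.range P,
      (inner ℂ (f s) (f t) : ℂ) = inner ℂ (s : H) (t : H) := by
    rintro ⟨s, hs⟩ ⟨t, ht⟩
    obtain ⟨c, rfl⟩ := hs
    obtain ⟨d, rfl⟩ := ht
    exact (congrArg₂ (fun a b => (inner ℂ a b : ℂ)) (hf c _) (hf d _)).trans (hPQ c d)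
  have hnorm : ∀ s : LinearMap.range P, ‖f s‖ = ‖s‖ := by
    intro s
    have h1 : (inner ℂ (f s) (f s) : ℂ) = inner ℂ (s : H) (s : H) := hfinner s s
    have h2 : ‖s‖ = ‖(s : H)‖ := rfl
    rw [h2, norm_eq_sqrt_re_inner (𝕜 := ℂ), norm_eq_sqrt_re_inner (𝕜 := ℂ) (s : H), h1]
  set L : LinearMap.range P →ₗᵢ[ℂ] H := ⟨f, hnorm⟩ with hL
  refine ⟨L.extend.toLinearMap, ?_, ?_, ?_⟩
  · intro x y
    exact L.extend.inner_map_map x y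
  · exact (LinearMap.injective_iff_surjective).mp L.extend.injective
  · intro i
    have hm : φ i ∈ LinearMap.range P := ⟨Pi.single i 1, by simp [hP]⟩
    have h3 : L.extend.toLinearMap (φ i) = L ⟨φ i, hm⟩ := L.extend_apply ⟨φ i, hm⟩
    rw [h3]
    have heq : (⟨φ i, hm⟩ : LinearMap.range P) =
        ⟨P (Pi.single i 1), ⟨Pi.single i 1, rfl⟩⟩ := by
      apply Subtype.ext
      simp [hP]
    show f ⟨φ i, hm⟩ = ψ i
    rw [heq]
    refine (hf (Pi.single i 1) _).trans ?_
    simp [hQ]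

/-- If two vectors `Ψ, Φ` of `H1 ⊗ H2` have the same partial trace over `H2` (expressed
as equality of the expectations `⟨Ψ, (A ⊗ I)Ψ⟩ = ⟨Φ, (A ⊗ I)Φ⟩` for every operator `A` on
`H1`), then `Ψ = (I ⊗ U)Φ` for some unitary `U` on `H2`.  Here `inn` is the inner product
on `H1 ⊗[ℂ] H2`, the unique sesquilinear form with
`inn (x1 ⊗ x2) (y1 ⊗ y2) = ⟨x1,y1⟩⟨x2,y2⟩`. -/
theorem exists_unitary_of_partialTrace_eq
    {H1 H2 : Type*}
    [NormedAddCommGroup H1] [InnerProductSpace ℂ H1] [FiniteDimensional ℂ H1]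
    [NormedAddCommGroup H2] [InnerProductSpace ℂ H2] [FiniteDimensional ℂ H2]
    (inn : (H1 ⊗[ℂ] H2) →ₗ⋆[ℂ] (H1 ⊗[ℂ] H2) →ₗ[ℂ] ℂ)
    (hinn : ∀ (x1 y1 : H1) (x2 y2 : H2),
      inn (x1 ⊗ₜ[ℂ] x2) (y1 ⊗ₜ[ℂ] y2) = (inner ℂ x1 y1 : ℂ) * (inner ℂ x2 y2 : ℂ))
    (Ψ Φ : H1 ⊗[ℂ] H2)
    (h : ∀ A : H1 →ₗ[ℂ] H1,
      inn Ψ (TensorProduct.map A LinearMap.id Ψ) =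
      inn Φ (TensorProduct.map A LinearMap.id Φ)) :
    ∃ U : H2 →ₗ[ℂ] H2,
      (∀ x y : H2, (inner ℂ (U x) (U y) : ℂ) = inner ℂ x y) ∧
      Function.Surjective U ∧
      Ψ = TensorProduct.map LinearMap.id U Φ := by
  classical
  set e := stdOrthonormalBasis ℂ H1 with hedef
  set coord : H1 → (H1 ⊗[ℂ] H2 →ₗ[ℂ] H2) := fun v =>
    TensorProduct.lift ((LinearMap.lsmul ℂ H2) ∘ₗ (innerSL ℂ v).toLinearMap) with hcoord
  have coord_tmul : ∀ (v x : H1) (y : H2),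
      coord v (x ⊗ₜ[ℂ] y) = (inner ℂ v x : ℂ) • y := by
    intro v x y
    simp [hcoord]
  have expand : ∀ z : H1 ⊗[ℂ] H2, z = ∑ i, e i ⊗ₜ[ℂ] (coord (e i) z) := by
    intro z
    have key : (LinearMap.id : H1 ⊗[ℂ] H2 →ₗ[ℂ] H1 ⊗[ℂ] H2) =
        ∑ i, (TensorProduct.mk ℂ H1 H2 (e i)).comp (coord (e i)) := by
      apply TensorProduct.ext'
      intro x y
      simp only [LinearMap.id_coe, id_eq, LinearMap.coe_sum, Finset.sum_apply,
        LinearMap.comp_apply, TensorProduct.mk_apply, coord_tmul]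
      simp_rw [TensorProduct.tmul_smul, TensorProduct.smul_tmul',
        ← TensorProduct.sum_tmul, e.sum_repr']
    conv_lhs => rw [← LinearMap.id_apply (R := ℂ) z, key]
    simp
  set ψ : Fin (Module.finrank ℂ H1) → H2 := fun i => coord (e i) Ψ with hψ
  set φ : Fin (Module.finrank ℂ H1) → H2 := fun i => coord (e i) Φ with hφ
  set A : Fin (Module.finrank ℂ H1) → Fin (Module.finrank ℂ H1) → (H1 →ₗ[ℂ] H1) :=
    fun i j => (LinearMap.toSpanSingleton ℂ H1 (e j)) ∘ₗ (innerSL ℂ (e i)).toLinearMap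
    with hA
  have hAapply : ∀ i j x, A i j x = (inner ℂ (e i) x : ℂ) • e j := by
    intro i j x; simp [hA, LinearMap.toSpanSingleton_apply]
  have comp : ∀ (i j : Fin (Module.finrank ℂ H1)) (v : Fin (Module.finrank ℂ H1) → H2),
      inn (∑ k, e k ⊗ₜ[ℂ] v k)
        (TensorProduct.map (A i j) LinearMap.id (∑ k, e k ⊗ₜ[ℂ] v k)) =
      inner ℂ (v j) (v i) := by
    intro i j v
    have horth := orthonormal_iff_ite.mp e.orthonormal
    simp only [map_sum, LinearMap.sum_apply, TensorProduct.map_tmul,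
      LinearMap.id_coe, id_eq, hAapply, hinn, inner_smul_right, horth]
    simp [mul_ite, ite_mul, Finset.sum_ite_eq, Finset.sum_ite_eq', Finset.mul_sum]
  have hgram : ∀ i j, (inner ℂ (ψ i) (ψ j) : ℂ) = inner ℂ (φ i) (φ j) := by
    intro i j
    have hh := h (A j i)
    rw [expand Ψ, expand Φ] at hh
    rw [comp j i ψ, comp j i φ] at hh
    exact hh
  obtain ⟨U, hU1, hU2, hU3⟩ := exists_unitary_map_of_gram_eq φ ψ hgram
  refine ⟨U, hU1, hU2, ?_⟩
  rw [expand Ψ, expand Φ, map_sum]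
  simp only [TensorProduct.map_tmul, LinearMap.id_coe, id_eq]
  congr 1
  funext i
  rw [hU3 i]
end
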